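/- Let U be an arbitrary semigroup and let T = ⟨U, p | Up = p⟩ be the semigroup generated by U and one extra element p ∉ U, defined by the relations u·v = uv (the product in U) and u·p = p for all u, v ∈ U. Then c.d. T = 1, and for every T-module A there is an isomorphism H¹(T,A) ≅ A/(p−1)A, where (p−1)A denotes the subgroup of A generated by {pa − a : a ∈ A}. -/

import Mathlib

structure SgModule (S : Type) [Semigroup S] where
  carrier : Type
  [grp : AddCommGroup carrier]
  smul : S → carrier → carrier
  smul_add : ∀ s a b, smul s (a + b) = smul s a + smul s b
  mul_smul : ∀ s t a, smul (s * t) a = smul s (smul t a)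

attribute [instance] SgModule.grp

/-- `altSign k a = (-1)^k • a`. -/
def altSign {A : Type} [AddCommGroup A] (k : ℕ) (a : A) : A :=
  if Even k then a else -a

lemma altSign_add {A : Type} [AddCommGroup A] (k : ℕ) (a b : A) :
    altSign k (a + b) = altSign k a + altSign k b := by
  unfold altSign; split <;> [rfl; exact neg_add a b]

def mulContract {S : Type} [Mul S] {n : ℕ} (x : Fin (n + 1) → S) (i : Fin n) :
    Fin n → S := fun j =>
  if (j : ℕ) < (i : ℕ) then x j.castSucc
  else if (j : ℕ) = (i : ℕ) then x j.castSucc * x j.succ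
  else x j.succ

namespace SgModule

variable {S : Type} [Semigroup S] (M : SgModule S)

abbrev cochain (n : ℕ) : Type := (Fin n → S) → M.carrier

def cobFun {n : ℕ} (f : M.cochain n) : M.cochain (n + 1) := fun x =>
  M.smul (x 0) (f (Fin.tail x))
    + (∑ i : Fin n, altSign ((i : ℕ) + 1) (f (mulContract x i)))
    + altSign (n + 1) (f (Fin.init x))

lemma cobFun_add {n : ℕ} (f g : M.cochain n) :
    M.cobFun (f + g) = M.cobFun f + M.cobFun g := by
  funext x
  show M.cobFun (f + g) x = M.cobFun f x + M.cobFun g x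
  unfold cobFun
  simp only [Pi.add_apply, altSign_add, M.smul_add]
  rw [Finset.sum_add_distrib]
  abel

def cob (n : ℕ) : M.cochain n →+ M.cochain (n + 1) :=
  AddMonoidHom.mk' M.cobFun M.cobFun_add

def cocycles (n : ℕ) : AddSubgroup (M.cochain n) := (M.cob n).ker

def cobounds : (n : ℕ) → AddSubgroup (M.cochain n)
  | 0 => ⊥
  | n + 1 => (M.cob n).range

def cohomology (n : ℕ) : Type :=
  M.cocycles n ⧸ (M.cobounds n).addSubgroupOf (M.cocycles n)

noncomputable instance (n : ℕ) : AddCommGroup (M.cohomology n) := by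
  unfold cohomology; infer_instance

end SgModule

noncomputable def cohDim (S : Type) [Semigroup S] : ℕ∞ :=
  sSup {e : ℕ∞ | ∃ n : ℕ, e = (n : ℕ∞) ∧ ∃ M : SgModule S, Nontrivial (M.cohomology n)}

def IsFreeSemigroup (T : Type) [Semigroup T] : Prop :=
  ∃ X : Type, Nonempty (T ≃* FreeSemigroup X)


/-- The defining congruence of the semigroup `T = ⟨U, p ∣ Up = p⟩`: generated
by `u·v = uv` and `u·p = p` (`u, v ∈ U`, with `p` the generator `none`). -/
def upCon (U : Type) [Semigroup U] : Con (FreeSemigroup (Option U)) :=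
  conGen (fun a b =>
    (∃ u v : U, a = FreeSemigroup.of (some u) * FreeSemigroup.of (some v) ∧
      b = FreeSemigroup.of (some (u * v))) ∨
    (∃ u : U, a = FreeSemigroup.of (some u) * FreeSemigroup.of none ∧
      b = FreeSemigroup.of none))

/-- The element `p` of `T = ⟨U, p ∣ Up = p⟩`. -/
def upP (U : Type) [Semigroup U] : (upCon U).Quotient :=
  ((FreeSemigroup.of (none : Option U) : FreeSemigroup (Option U)) : (upCon U).Quotient)

section Helpers

variable {A : Type} [AddCommGroup A]

lemma altSign_zero' (k : ℕ) : altSign (k) (0 : A) = 0 := by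
  unfold altSign; split <;> simp

lemma altSign_neg (k : ℕ) (a : A) : altSign k (-a) = -altSign k a := by
  unfold altSign; split <;> simp

lemma altSign_sub (k : ℕ) (a b : A) : altSign k (a - b) = altSign k a - altSign k b := by
  unfold altSign; split <;> [rfl; exact neg_sub' a b]

lemma altSign_succ (k : ℕ) (a : A) : altSign (k + 1) a = -altSign k a := by
  unfold altSign
  rcases Nat.even_or_odd k with h | h
  · rw [if_pos h, if_neg (by simp [Nat.even_add_one, h])]
  · rw [if_neg (Nat.not_even_iff_odd.mpr h), if_pos (by simp [Nat.even_add_one, Nat.not_even_iff_odd.mpr h]), neg_neg]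

lemma altSign_even {k : ℕ} (h : Even k) (a : A) : altSign k a = a := if_pos h

lemma altSign_odd {k : ℕ} (h : ¬ Even k) (a : A) : altSign k a = -a := if_neg h

lemma altSign_add_two (k : ℕ) (a : A) : altSign (k + 2) a = altSign k a := by
  rw [show k + 2 = (k+1)+1 from rfl, altSign_succ, altSign_succ, neg_neg]

lemma altSign_altSign (j k : ℕ) (a : A) : altSign j (altSign k a) = altSign (j + k) a := by
  unfold altSign
  by_cases hj : Even j <;> by_cases hk : Even k <;>
    simp [hj, hk, Nat.even_add, neg_neg]

lemma altSign_sum {ι : Type*} (s : Finset ι) (k : ℕ) (g : ι → A) :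
    altSign k (∑ i ∈ s, g i) = ∑ i ∈ s, altSign k (g i) := by
  unfold altSign; split <;> simp

end Helpers
section FinHelpers

variable {α : Type}

lemma tail_snoc {n : ℕ} (x : Fin (n + 1) → α) (a : α) :
    Fin.tail (n := n+1) (α := fun _ => α) (Fin.snoc x a) = Fin.snoc (Fin.tail x) a := by
  funext j
  induction j using Fin.lastCases with
  | last =>
      show (Fin.snoc x a : Fin (n+2) → α) (Fin.last n).succ = _
      rw [Fin.succ_last, Fin.snoc_last, Fin.snoc_last]
  | cast j' =>
      show (Fin.snoc x a : Fin (n+2) → α) j'.castSucc.succ = _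
      rw [Fin.succ_castSucc, Fin.snoc_castSucc, Fin.snoc_castSucc]
      rfl

lemma snoc_zero {n : ℕ} (x : Fin (n + 1) → α) (a : α) :
    (Fin.snoc x a : Fin (n+2) → α) 0 = x 0 := by
  show (Fin.snoc x a : Fin (n+2) → α) (Fin.castSucc 0) = x 0
  rw [Fin.snoc_castSucc]

lemma init_zero {n : ℕ} (x : Fin (n + 2) → α) : Fin.init x 0 = x 0 := by
  show x (Fin.castSucc 0) = x 0
  rw [Fin.castSucc_zero]

lemma tail_last {n : ℕ} (x : Fin (n + 2) → α) :
    Fin.tail x (Fin.last n) = x (Fin.last (n+1)) := by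
  show x (Fin.last n).succ = _
  rw [Fin.succ_last]

lemma init_tail {n : ℕ} (x : Fin (n + 2) → α) :
    Fin.init (Fin.tail x) = Fin.tail (Fin.init x) := by
  funext j
  show x (j.castSucc).succ = x (j.succ).castSucc
  rw [Fin.succ_castSucc]

end FinHelpers

section ContractHelpers

variable {S : Type} [Mul S]

lemma mulContract_snoc_castSucc {n : ℕ} (x : Fin (n + 1) → S) (a : S) (i : Fin n) :
    mulContract (Fin.snoc x a) i.castSucc = Fin.snoc (mulContract x i) a := by
  funext j
  induction j using Fin.lastCases with
  | last =>
      rw [Fin.snoc_last]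
      show (if (n : ℕ) < (i.castSucc : ℕ) then _ else if (n : ℕ) = (i.castSucc : ℕ) then _ else
        (Fin.snoc x a : Fin (n+2) → S) (Fin.last n).succ) = a
      rw [if_neg (by simp only [Fin.coe_castSucc]; omega), if_neg (by simp only [Fin.coe_castSucc]; omega), Fin.succ_last, Fin.snoc_last]
  | cast j' =>
      rw [Fin.snoc_castSucc]
      show (if ((j'.castSucc : Fin (n+1)) : ℕ) < ((i.castSucc : Fin (n+1)) : ℕ) then
          (Fin.snoc x a : Fin (n+2) → S) (j'.castSucc).castSucc
        else if ((j'.castSucc : Fin (n+1)) : ℕ) = ((i.castSucc : Fin (n+1)) : ℕ) then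
          (Fin.snoc x a : Fin (n+2) → S) (j'.castSucc).castSucc *
            (Fin.snoc x a : Fin (n+2) → S) (j'.castSucc).succ
        else (Fin.snoc x a : Fin (n+2) → S) (j'.castSucc).succ) = mulContract x i j'
      rw [Fin.succ_castSucc, Fin.snoc_castSucc, Fin.snoc_castSucc]
      simp only [Fin.coe_castSucc]
      rfl

lemma mulContract_snoc_last {n : ℕ} (x : Fin (n + 1) → S) (a : S) :
    mulContract (Fin.snoc x a) (Fin.last n) = Fin.snoc (Fin.init x) (x (Fin.last n) * a) := by
  funext j
  induction j using Fin.lastCases with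
  | last =>
      rw [Fin.snoc_last]
      show (if (n : ℕ) < ((Fin.last n : Fin (n+1)) : ℕ) then _
        else if (n : ℕ) = ((Fin.last n : Fin (n+1)) : ℕ) then
          (Fin.snoc x a : Fin (n+2) → S) (Fin.last n).castSucc *
            (Fin.snoc x a : Fin (n+2) → S) (Fin.last n).succ
        else _) = x (Fin.last n) * a
      rw [if_neg (by simp), if_pos (by simp), Fin.snoc_castSucc, Fin.succ_last, Fin.snoc_last]
  | cast j' =>
      rw [Fin.snoc_castSucc]
      show (if ((j'.castSucc : Fin (n+1)) : ℕ) < ((Fin.last n : Fin (n+1)) : ℕ) then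
          (Fin.snoc x a : Fin (n+2) → S) (j'.castSucc).castSucc
        else if ((j'.castSucc : Fin (n+1)) : ℕ) = ((Fin.last n : Fin (n+1)) : ℕ) then
          (Fin.snoc x a : Fin (n+2) → S) (j'.castSucc).castSucc *
            (Fin.snoc x a : Fin (n+2) → S) (j'.castSucc).succ
        else (Fin.snoc x a : Fin (n+2) → S) (j'.castSucc).succ) = Fin.init x j'
      rw [if_pos (by simpa using j'.isLt), Fin.snoc_castSucc]
      rfl

lemma mulContract_castSucc {n : ℕ} (x : Fin (n + 2) → S) (i : Fin n) :
    mulContract x i.castSucc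
      = Fin.snoc (mulContract (Fin.init x) i) (x (Fin.last (n+1))) := by
  conv_lhs => rw [← Fin.snoc_init_self x]
  rw [mulContract_snoc_castSucc]

lemma mulContract_last {n : ℕ} (x : Fin (n + 2) → S) :
    mulContract x (Fin.last n)
      = Fin.snoc (Fin.init (Fin.init x)) (Fin.init x (Fin.last n) * x (Fin.last (n+1))) := by
  conv_lhs => rw [← Fin.snoc_init_self x]
  rw [mulContract_snoc_last]

end ContractHelpers
namespace SgModule

variable {S : Type} [Semigroup S] (M : SgModule S)

/-- `M.smul s` as an additive monoid hom. -/
def smulHom (s : S) : M.carrier →+ M.carrier :=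
  AddMonoidHom.mk' (M.smul s) (M.smul_add s)

lemma smul_sub' (s : S) (a b : M.carrier) :
    M.smul s (a - b) = M.smul s a - M.smul s b :=
  map_sub (M.smulHom s) a b

lemma smul_zero' (s : S) : M.smul s 0 = 0 :=
  map_zero (M.smulHom s)

lemma smul_sum' {ι : Type} (s : S) (t : Finset ι) (g : ι → M.carrier) :
    M.smul s (∑ i ∈ t, g i) = ∑ i ∈ t, M.smul s (g i) :=
  map_sum (M.smulHom s) g t

lemma cobFun_neg {n : ℕ} (f : M.cochain n) : M.cobFun (-f) = -(M.cobFun f) :=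
  map_neg (M.cob n) f

lemma cobFun_sub {n : ℕ} (f g : M.cochain n) :
    M.cobFun (f - g) = M.cobFun f - M.cobFun g :=
  map_sub (M.cob n) f g

lemma cobFun_altSign {n : ℕ} (m : ℕ) (g : M.cochain n) (x : Fin (n+1) → S) :
    M.cobFun (fun y => altSign m (g y)) x = altSign m (M.cobFun g x) := by
  rcases Nat.even_or_odd m with h | h
  · simp only [altSign, if_pos h]
  · simp only [altSign, if_neg (Nat.not_even_iff_odd.mpr h)]
    have : (fun y => -(g y)) = -g := rfl
    rw [this, cobFun_neg]
    rfl

lemma lemA (k : ℕ) (f : M.cochain (k+1)) (a : S) (x : Fin (k+1) → S) :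
    M.cobFun (fun y => f (Fin.snoc y a)) x
      = M.cobFun f (Fin.snoc x a)
        + altSign (k+1) (f x - f (Fin.snoc (Fin.init x) (x (Fin.last k) * a))
            + f (Fin.snoc (Fin.init x) a)) := by
  unfold cobFun
  rw [Fin.sum_univ_castSucc
    (f := fun i : Fin (k+1) => altSign ((i : ℕ) + 1) (f (mulContract (Fin.snoc x a) i)))]
  simp only [tail_snoc, Fin.init_snoc, snoc_zero, mulContract_snoc_castSucc,
    mulContract_snoc_last, Fin.coe_castSucc, Fin.val_last]
  rw [altSign_add, altSign_sub, altSign_succ (k+1)]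
  abel
lemma lemB (k : ℕ) (f : M.cochain (k+2)) (p : S) (π : S → ℕ) (pw : ℕ → S)
    (hπ : ∀ s t, π (s * t) = π s + π t)
    (hpw0 : pw 0 = p)
    (hpwmul : ∀ (s : S) (j : ℕ), s * pw j = pw (π s + j))
    (hpwsucc : ∀ j, pw (j+1) = pw j * p)
    (x : Fin (k+2) → S) :
    M.cobFun (fun y => ∑ j ∈ Finset.range (π (y (Fin.last k))),
        f (Fin.snoc (Fin.snoc (Fin.init y) (pw j)) p)) x
      = (∑ j ∈ Finset.range (π (x (Fin.last (k+1)))),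
          M.cobFun f (Fin.snoc (Fin.snoc (Fin.init x) (pw j)) p))
        + altSign (k+1) (f (Fin.snoc (Fin.init x) (x (Fin.last (k+1)) * p))
            - f (Fin.snoc (Fin.init x) p)) := by
  have hxp : x (Fin.last (k+1)) * p = pw (π (x (Fin.last (k+1)))) := by
    rw [← hpw0, hpwmul, Nat.add_zero]
  unfold cobFun
  simp only [Fin.sum_univ_castSucc, tail_snoc, Fin.init_snoc, Fin.snoc_last, snoc_zero,
    init_zero, tail_last, init_tail, mulContract_castSucc, mulContract_last,
    Fin.coe_castSucc, Fin.val_last, hπ, hpwmul, ← hpwsucc]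
  have h2 : f (Fin.snoc (Fin.init x) p) = f (Fin.snoc (Fin.init x) (pw 0)) := by rw [hpw0]
  have e2 : ∀ a : M.carrier, altSign (k+2+1) a = altSign (k+1) a := fun a => by
    rw [show k+2+1 = (k+1)+2 from rfl, altSign_add_two]
  rw [hxp, h2, M.smul_sum']
  simp only [altSign_sum, altSign_sub, altSign_succ (k+1), e2, Finset.sum_add_distrib,
    Finset.sum_neg_distrib]
  rw [Finset.sum_comm, Finset.sum_range_add
    (fun j => altSign (k+1) (f (Fin.snoc (Fin.snoc (Fin.init (Fin.init x)) (pw j)) p)))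
    (π (Fin.init x (Fin.last k))) (π (x (Fin.last (k+1))))]
  have tel : (∑ j ∈ Finset.range (π (x (Fin.last (k+1)))),
        altSign (k+1) (f (Fin.snoc (Fin.init x) (pw (j+1)))))
      - ∑ j ∈ Finset.range (π (x (Fin.last (k+1)))),
        altSign (k+1) (f (Fin.snoc (Fin.init x) (pw j)))
      = altSign (k+1) (f (Fin.snoc (Fin.init x) (pw (π (x (Fin.last (k+1)))))))
        - altSign (k+1) (f (Fin.snoc (Fin.init x) (pw 0))) := by
    rw [← Finset.sum_sub_distrib]
    exact Finset.sum_range_sub (fun j => altSign (k+1) (f (Fin.snoc (Fin.init x) (pw j)))) _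
  rw [sub_eq_iff_eq_add] at tel
  rw [tel]
  abel

variable (p : S) (π : S → ℕ) (pw : ℕ → S)

/-- The contracting homotopy `C^{m+2} → C^{m+1}`. -/
def hco (m : ℕ) (f : M.cochain (m+2)) : M.cochain (m+1) := fun y =>
  altSign m (f (Fin.snoc y p)
    - ∑ j ∈ Finset.range (π (y (Fin.last m))), f (Fin.snoc (Fin.snoc (Fin.init y) (pw j)) p))

lemma hco_zero (m : ℕ) : M.hco p π pw m 0 = 0 := by
  funext y
  simp only [hco, Pi.zero_apply, Finset.sum_const_zero, sub_zero, altSign_zero']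

lemma master (hπ : ∀ s t, π (s * t) = π s + π t)
    (hpw0 : pw 0 = p)
    (hpwmul : ∀ (s : S) (j : ℕ), s * pw j = pw (π s + j))
    (hpwsucc : ∀ j, pw (j+1) = pw j * p)
    (m : ℕ) (f : M.cochain (m+2)) :
    M.cobFun (M.hco p π pw m f) + M.hco p π pw (m+1) (M.cobFun f) = f := by
  funext x
  have key : M.cobFun (M.hco p π pw m f) x
      = altSign m (M.cobFun (fun y' => f (Fin.snoc y' p)) x
          - M.cobFun (fun y' => ∑ j ∈ Finset.range (π (y' (Fin.last m))),
              f (Fin.snoc (Fin.snoc (Fin.init y') (pw j)) p)) x) := by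
    have h1 : M.hco p π pw m f
        = fun y => altSign m ((((fun y' => f (Fin.snoc y' p)) : M.cochain (m+1))
            - ((fun y' => ∑ j ∈ Finset.range (π (y' (Fin.last m))),
                f (Fin.snoc (Fin.snoc (Fin.init y') (pw j)) p)) : M.cochain (m+1))) y) := rfl
    rw [h1, cobFun_altSign, cobFun_sub, Pi.sub_apply]
  have h2 : M.hco p π pw (m+1) (M.cobFun f) x
      = altSign (m+1) (M.cobFun f (Fin.snoc x p)
          - ∑ j ∈ Finset.range (π (x (Fin.last (m+1)))),
            M.cobFun f (Fin.snoc (Fin.snoc (Fin.init x) (pw j)) p)) := rfl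
  rw [Pi.add_apply, key, h2, lemA M (m+1) f p x,
    lemB M m f p π pw hπ hpw0 hpwmul hpwsucc x]
  simp only [altSign_sub, altSign_add, altSign_neg, altSign_succ, altSign_altSign]
  simp only [altSign_even (⟨m, rfl⟩ : Even (m+m))]
  abel
end SgModule

section UPfacts

variable (U : Type) [Semigroup U]

/-- Length-counting homomorphism on the free semigroup: counts occurrences of `p`. -/
def piF : FreeSemigroup (Option U) →ₙ* Multiplicative ℕ :=
  FreeSemigroup.lift (fun o => Multiplicative.ofAdd (o.elim 1 (fun _ => 0)))

lemma upCon_le_ker : upCon U ≤ Con.ker (piF U) := by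
  apply Con.conGen_le.mpr
  rintro a b (⟨u, v, rfl, rfl⟩ | ⟨u, rfl, rfl⟩) <;>
    simp [Con.ker_rel, piF, FreeSemigroup.lift_of] <;> rfl

/-- Number of occurrences of `p` in an element of `T`. -/
def piT : (upCon U).Quotient → ℕ := fun t =>
  Con.liftOn t (fun w => Multiplicative.toAdd (piF U w))
    (fun a b h => congrArg Multiplicative.toAdd (upCon_le_ker U h))

lemma piT_coe (w : FreeSemigroup (Option U)) :
    piT U (w : (upCon U).Quotient) = Multiplicative.toAdd (piF U w) := rfl

lemma piT_mul (s t : (upCon U).Quotient) : piT U (s * t) = piT U s + piT U t := by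
  induction s using Con.induction_on with
  | H w₁ =>
    induction t using Con.induction_on with
    | H w₂ =>
      rw [← Con.coe_mul, piT_coe, piT_coe, piT_coe, map_mul]
      rfl

/-- `pwT U j = p^(j+1)`. -/
def pwT : ℕ → (upCon U).Quotient
  | 0 => upP U
  | (j+1) => pwT j * upP U

lemma u_mul_p (u : U) :
    ((FreeSemigroup.of (some u) : FreeSemigroup (Option U)) : (upCon U).Quotient) * upP U
      = upP U := by
  show ((FreeSemigroup.of (some u) : FreeSemigroup (Option U)) : (upCon U).Quotient)
      * ((FreeSemigroup.of (none : Option U) : FreeSemigroup (Option U)) : (upCon U).Quotient)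
      = _
  rw [← Con.coe_mul]
  exact (Con.eq _).2 (ConGen.Rel.of _ _ (Or.inr ⟨u, rfl, rfl⟩))

lemma u_mul_pw (u : U) (m : ℕ) :
    ((FreeSemigroup.of (some u) : FreeSemigroup (Option U)) : (upCon U).Quotient) * pwT U m
      = pwT U m := by
  induction m with
  | zero => exact u_mul_p U u
  | succ m ih => show _ * (pwT U m * upP U) = _; rw [← mul_assoc, ih]; rfl

lemma p_mul_pw (m : ℕ) : upP U * pwT U m = pwT U m * upP U := by
  induction m with
  | zero => rfl
  | succ m ih => show upP U * (pwT U m * upP U) = _; rw [← mul_assoc, ih]; rfl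

lemma gen_mul_pw (x : Option U) (m : ℕ) :
    ((FreeSemigroup.of x : FreeSemigroup (Option U)) : (upCon U).Quotient) * pwT U m
      = pwT U (piT U ((FreeSemigroup.of x : FreeSemigroup (Option U)) : (upCon U).Quotient) + m) := by
  cases x with
  | none =>
      have h1 : piT U ((FreeSemigroup.of (none : Option U) : FreeSemigroup (Option U)) :
          (upCon U).Quotient) = 1 := rfl
      rw [h1]
      show upP U * pwT U m = pwT U (1 + m)
      rw [p_mul_pw, Nat.add_comm]
      rfl
  | some u =>
      have h1 : piT U ((FreeSemigroup.of (some u) : FreeSemigroup (Option U)) :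
          (upCon U).Quotient) = 0 := rfl
      rw [h1, Nat.zero_add, u_mul_pw]

lemma mul_p (t : (upCon U).Quotient) : t * upP U = pwT U (piT U t) := by
  induction t using Con.induction_on with
  | H w =>
    induction w using FreeSemigroup.recOnMul with
    | ih1 x =>
        have := gen_mul_pw U x 0
        rw [Nat.add_zero] at this
        exact this
    | ih2 x y _ ihy =>
        rw [Con.coe_mul, mul_assoc, ihy, gen_mul_pw, ← piT_mul, ← Con.coe_mul]

lemma mul_pw (t : (upCon U).Quotient) (m : ℕ) : t * pwT U m = pwT U (piT U t + m) := by
  induction m with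
  | zero => rw [Nat.add_zero]; exact mul_p U t
  | succ m ih =>
      show t * (pwT U m * upP U) = _
      rw [← mul_assoc, ih]
      rfl

end UPfacts

section Vanish

variable (U : Type) [Semigroup U]

lemma cohomology_subsingleton (M : SgModule (upCon U).Quotient) (m : ℕ) :
    Subsingleton (M.cohomology (m+2)) := by
  have htop : (M.cobounds (m+2)).addSubgroupOf (M.cocycles (m+2)) = ⊤ := by
    rw [AddSubgroup.eq_top_iff']
    rintro ⟨f, hf⟩
    rw [AddSubgroup.mem_addSubgroupOf]
    have hf0 : M.cobFun f = 0 := hf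
    have hm := M.master (upP U) (piT U) (pwT U) (piT_mul U) rfl (mul_pw U)
      (fun j => rfl) m f
    rw [hf0, M.hco_zero, add_zero] at hm
    exact ⟨M.hco (upP U) (piT U) (pwT U) m f, hm⟩
  show Subsingleton (M.cocycles (m+2) ⧸ (M.cobounds (m+2)).addSubgroupOf (M.cocycles (m+2)))
  rw [htop]
  exact QuotientAddGroup.subsingleton_quotient_top

end Vanish

namespace SgModule

variable {S : Type} [Semigroup S] (M : SgModule S)

omit [Semigroup S] in
lemma empty_tuple (z : Fin 0 → S) : z = fun i => i.elim0 := funext fun i => i.elim0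

lemma cobFun_zero_eval (g : M.cochain 0) (x : Fin 1 → S) :
    M.cobFun g x = M.smul (x 0) (g (fun i => i.elim0)) - g (fun i => i.elim0) := by
  unfold cobFun
  rw [empty_tuple (S := S) (Fin.tail x), empty_tuple (S := S) (Fin.init x)]
  simp only [Finset.univ_eq_empty, Finset.sum_empty, altSign_odd (by decide : ¬ Even 1)]
  abel

omit [Semigroup S] in
lemma one_tuple (y : Fin 1 → S) : y = fun _ => y 0 :=
  funext fun j => by rw [Subsingleton.elim j 0]

lemma cobFun_one_eval (f : M.cochain 1) (x : Fin 2 → S) :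
    M.cobFun f x = M.smul (x 0) (f (fun _ => x 1)) - f (fun _ => x 0 * x 1)
      + f (fun _ => x 0) := by
  unfold cobFun
  have h1 : Fin.tail x = fun _ : Fin 1 => x 1 := by
    rw [one_tuple (S := S) (Fin.tail x)]
    show (fun _ : Fin 1 => x (Fin.succ 0)) = _
    rw [Fin.succ_zero_eq_one]
  have h2 : mulContract x 0 = fun _ : Fin 1 => x 0 * x 1 := by
    rw [one_tuple (S := S) (mulContract x 0)]
    show (fun _ : Fin 1 => mulContract x 0 0) = _
    have : mulContract x 0 0 = x 0 * x 1 := by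
      show (if (0:ℕ) < (0:ℕ) then _ else if (0:ℕ) = (0:ℕ) then
        x (Fin.castSucc 0) * x (Fin.succ 0) else _) = x 0 * x 1
      rw [if_neg (by omega), if_pos rfl, Fin.castSucc_zero, Fin.succ_zero_eq_one]
    rw [this]
  have h3 : Fin.init x = fun _ : Fin 1 => x 0 := by
    rw [one_tuple (S := S) (Fin.init x)]
    show (fun _ : Fin 1 => x (Fin.castSucc 0)) = _
    rw [Fin.castSucc_zero]
  rw [h1, Fin.sum_univ_one, h2, h3]
  simp only [Fin.val_zero, altSign_odd (by decide : ¬ Even (0+1)),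
    altSign_even (by decide : Even (1+1))]
  abel

/-- The carrier of the semidirect product `A ⋊ S` used to build crossed homomorphisms. -/
def TwProd : Type := M.carrier × S

instance : Semigroup (M.TwProd) where
  mul x y := (x.1 + M.smul x.2 y.1, x.2 * y.2)
  mul_assoc x y z := by
    show Prod.mk _ _ = Prod.mk _ _
    rw [Prod.mk.injEq]
    constructor
    · show x.1 + M.smul x.2 y.1 + M.smul (x.2 * y.2) z.1
        = x.1 + M.smul x.2 (y.1 + M.smul y.2 z.1)
      rw [M.mul_smul, M.smul_add, add_assoc]
    · exact mul_assoc _ _ _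

lemma twProd_mul (x y : M.TwProd) : x * y = (x.1 + M.smul x.2 y.1, x.2 * y.2) := rfl

end SgModule

section Crossed

variable (U : Type) [Semigroup U] (M : SgModule (upCon U).Quotient) (a : M.carrier)

/-- The map sending a generator to the pair (value of the crossed hom, generator). -/
def crossGen : Option U → M.TwProd := fun o =>
  (Option.elim o a (fun u => a - M.smul ((FreeSemigroup.of (some u) :
      FreeSemigroup (Option U)) : (upCon U).Quotient) a),
    ((FreeSemigroup.of o : FreeSemigroup (Option U)) : (upCon U).Quotient))

/-- The lifted crossed-hom-with-grading on the free semigroup. -/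
def crossPsi : FreeSemigroup (Option U) →ₙ* M.TwProd :=
  FreeSemigroup.lift (crossGen U M a)

lemma crossPsi_snd : ∀ w : FreeSemigroup (Option U),
    (crossPsi U M a w).2 = (w : (upCon U).Quotient) := by
  intro w
  induction w using FreeSemigroup.recOnMul with
  | ih1 x => rw [crossPsi, FreeSemigroup.lift_of]; rfl
  | ih2 x y ihx ihy =>
      rw [map_mul]
      show (crossPsi U M a (FreeSemigroup.of x)).2 * (crossPsi U M a y).2 = _
      rw [ihx, ihy, ← Con.coe_mul]

lemma crossPsi_resp : ∀ w₁ w₂, upCon U w₁ w₂ → crossPsi U M a w₁ = crossPsi U M a w₂ := by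
  have hle : upCon U ≤ Con.ker (crossPsi U M a) := by
    apply Con.conGen_le.mpr
    rintro w₁ w₂ (⟨u, v, rfl, rfl⟩ | ⟨u, rfl, rfl⟩)
    · show crossPsi U M a _ = crossPsi U M a _
      have hmul : ((FreeSemigroup.of (some u) : FreeSemigroup (Option U)) :
            (upCon U).Quotient) * ((FreeSemigroup.of (some v) : FreeSemigroup (Option U)) :
            (upCon U).Quotient)
          = ((FreeSemigroup.of (some (u * v)) : FreeSemigroup (Option U)) :
            (upCon U).Quotient) := by
        rw [← Con.coe_mul]
        exact (Con.eq _).2 (ConGen.Rel.of _ _ (Or.inl ⟨u, v, rfl, rfl⟩))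
      rw [map_mul]
      simp only [crossPsi, FreeSemigroup.lift_of, SgModule.twProd_mul, crossGen, Option.elim]
      refine (SgModule.twProd_mul M _ _).trans ?_; dsimp only
      apply (Prod.mk.injEq _ _ _ _).mpr
      refine ⟨?_, hmul⟩
      rw [M.smul_sub', ← M.mul_smul, hmul]
      abel
    · show crossPsi U M a _ = crossPsi U M a _
      rw [map_mul]
      simp only [crossPsi, FreeSemigroup.lift_of, SgModule.twProd_mul, crossGen, Option.elim]
      refine (SgModule.twProd_mul M _ _).trans ?_; dsimp only
      apply (Prod.mk.injEq _ _ _ _).mpr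
      refine ⟨?_, u_mul_p U u⟩
      abel
  exact fun w₁ w₂ h => hle h

/-- The crossed homomorphism `T → A` with value `a` at `p`. -/
def crossFun : (upCon U).Quotient → M.carrier := fun t =>
  Con.liftOn t (fun w => (crossPsi U M a w).1)
    (fun w₁ w₂ h => congrArg Prod.fst (crossPsi_resp U M a w₁ w₂ h))

lemma crossFun_p : crossFun U M a (upP U) = a := by
  show (crossPsi U M a (FreeSemigroup.of none)).1 = a
  rw [crossPsi, FreeSemigroup.lift_of]
  rfl

lemma crossFun_cocycle (s t : (upCon U).Quotient) :
    crossFun U M a (s * t) = M.smul s (crossFun U M a t) + crossFun U M a s := by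
  induction s using Con.induction_on with
  | H w₁ =>
    induction t using Con.induction_on with
    | H w₂ =>
      rw [← Con.coe_mul]
      show (crossPsi U M a (w₁ * w₂)).1 = _
      rw [map_mul]
      show (crossPsi U M a w₁).1 + M.smul (crossPsi U M a w₁).2 (crossPsi U M a w₂).1 = _
      rw [crossPsi_snd]
      exact add_comm _ _

end Crossed

section H1

variable (U : Type) [Semigroup U] (M : SgModule (upCon U).Quotient)

/-- The subgroup `(p-1)A`. -/
def pK : AddSubgroup M.carrier :=
  AddSubgroup.closure {x : M.carrier | ∃ a : M.carrier, x = M.smul (upP U) a - a}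

/-- `a ↦ pa - a` as an additive hom. -/
def pHom : M.carrier →+ M.carrier :=
  AddMonoidHom.mk' (fun a => M.smul (upP U) a - a)
    (fun a b => by show M.smul (upP U) (a + b) - (a + b) = _; rw [M.smul_add]; abel)

lemma mem_pK {x : M.carrier} : x ∈ pK U M ↔ ∃ a, x = M.smul (upP U) a - a := by
  have hset : {x : M.carrier | ∃ a : M.carrier, x = M.smul (upP U) a - a}
      = (Set.range (pHom U M)) := by
    ext y
    constructor
    · rintro ⟨b, rfl⟩; exact ⟨b, rfl⟩
    · rintro ⟨b, rfl⟩; exact ⟨b, rfl⟩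
  rw [pK, hset, ← AddMonoidHom.coe_range, AddSubgroup.closure_eq]
  constructor
  · rintro ⟨b, rfl⟩; exact ⟨b, rfl⟩
  · rintro ⟨b, rfl⟩; exact ⟨b, rfl⟩

lemma cocycle_spec (f : M.cochain 1) (hf : f ∈ M.cocycles 1) (s t : (upCon U).Quotient) :
    f (fun _ => s * t) = M.smul s (f (fun _ => t)) + f (fun _ => s) := by
  have h : M.cobFun f = 0 := hf
  have h2 := congrFun h ![s, t]
  rw [M.cobFun_one_eval] at h2
  simp only [Matrix.cons_val_zero, Matrix.cons_val_one, Matrix.head_cons, Pi.zero_apply] at h2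
  have h3 : M.smul s (f (fun _ => t)) + f (fun _ => s) - f (fun _ => s * t) = 0 := by
    rw [← h2]; abel
  exact (sub_eq_zero.mp h3).symm

lemma crossed_vanish (F : (upCon U).Quotient → M.carrier)
    (hF : ∀ s t, F (s * t) = M.smul s (F t) + F s) (hFp : F (upP U) = 0) :
    ∀ t, F t = 0 := by
  intro t
  induction t using Con.induction_on with
  | H w =>
    induction w using FreeSemigroup.recOnMul with
    | ih1 x =>
        cases x with
        | none => exact hFp
        | some u =>
            have h := hF ((FreeSemigroup.of (some u) : FreeSemigroup (Option U)) :
              (upCon U).Quotient) (upP U)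
            rw [u_mul_p U u, hFp, M.smul_zero', zero_add] at h
            exact h.symm
    | ih2 x y ihx ihy =>
        rw [Con.coe_mul, hF, ihx, ihy, M.smul_zero', zero_add]

theorem H1_equiv : Nonempty (M.cohomology 1 ≃+ M.carrier ⧸ pK U M) := by
  classical
  -- the evaluation-at-p homomorphism on cocycles
  let Φ : M.cocycles 1 →+ M.carrier ⧸ pK U M :=
    (QuotientAddGroup.mk' (pK U M)).comp
      ((Pi.evalAddMonoidHom (fun _ : Fin 1 → (upCon U).Quotient => M.carrier)
          (fun _ => upP U)).comp (AddSubgroup.subtype (M.cocycles 1)))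
  have hΦker : (M.cobounds 1).addSubgroupOf (M.cocycles 1) ≤ Φ.ker := by
    rintro ⟨f, hf⟩ hmem
    have hmem' : f ∈ M.cobounds 1 := hmem
    obtain ⟨g, hg⟩ := hmem'
    rw [AddMonoidHom.mem_ker]
    show (QuotientAddGroup.mk' (pK U M)) (f (fun _ => upP U)) = 0
    have hfval : f (fun _ => upP U)
        = M.smul (upP U) (g (fun i => i.elim0)) - g (fun i => i.elim0) := by
      rw [← hg]
      exact M.cobFun_zero_eval g (fun _ => upP U)
    rw [QuotientAddGroup.mk'_apply, QuotientAddGroup.eq_zero_iff, hfval]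
    exact (mem_pK U M).2 ⟨_, rfl⟩
  let Ψ : (M.cocycles 1 ⧸ (M.cobounds 1).addSubgroupOf (M.cocycles 1)) →+
      M.carrier ⧸ pK U M := QuotientAddGroup.lift _ Φ hΦker
  have hinj : Function.Injective Ψ := by
    rw [injective_iff_map_eq_zero]
    intro q hq
    induction q using QuotientAddGroup.induction_on with
    | H z =>
      obtain ⟨f, hf⟩ := z
      rw [QuotientAddGroup.lift_mk'] at hq
      have hq2 : f (fun _ => upP U) ∈ pK U M := by
        have := hq
        rw [show Φ ⟨f, hf⟩ = (QuotientAddGroup.mk' (pK U M)) (f (fun _ => upP U)) from rfl,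
          QuotientAddGroup.mk'_apply, QuotientAddGroup.eq_zero_iff] at this
        exact this
      obtain ⟨a, ha⟩ := (mem_pK U M).1 hq2
      rw [QuotientAddGroup.eq_zero_iff]
      -- show f is the coboundary of the constant 0-cochain a
      show f ∈ M.cobounds 1
      refine ⟨(fun _ => a : M.cochain 0), ?_⟩
      show M.cobFun (fun _ => a) = f
      -- consider D t = f(t) - (t•a - a); it is a crossed hom vanishing at p
      have hD : ∀ t, f (fun _ => t) - (M.smul t a - a) = 0 := by
        apply crossed_vanish U M
        · intro s t
          rw [cocycle_spec U M f hf s t, M.mul_smul, M.smul_sub', M.smul_sub']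
          abel
        · rw [← ha, sub_self]
      funext x
      rw [M.cobFun_zero_eval]
      have hD2 := hD (x 0)
      have hx : f x = f (fun _ => x 0) := by rw [← SgModule.one_tuple (S := (upCon U).Quotient) x]
      rw [hx, sub_eq_zero.mp hD2]
  have hsurj : Function.Surjective Ψ := by
    intro q
    induction q using QuotientAddGroup.induction_on with
    | H a =>
      have hmem : (fun y : Fin 1 → (upCon U).Quotient => crossFun U M a (y 0)) ∈
          M.cocycles 1 := by
        show M.cobFun (fun y : Fin 1 → (upCon U).Quotient => crossFun U M a (y 0)) = 0
        funext x
        rw [M.cobFun_one_eval]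
        show M.smul (x 0) (crossFun U M a (x 1)) - crossFun U M a (x 0 * x 1)
            + crossFun U M a (x 0) = 0
        rw [crossFun_cocycle]
        abel
      refine ⟨QuotientAddGroup.mk ⟨_, hmem⟩, ?_⟩
      show Φ ⟨(fun y : Fin 1 → (upCon U).Quotient => crossFun U M a (y 0)), hmem⟩ = ↑a
      show (QuotientAddGroup.mk' (pK U M)) (crossFun U M a (upP U)) = ↑a
      rw [crossFun_p]
      rfl
  exact ⟨AddEquiv.ofBijective Ψ ⟨hinj, hsurj⟩⟩

end H1

section Main

/-- The trivial `T`-module `ℤ`. -/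
@[reducible] def trivMod (S : Type) [Semigroup S] : SgModule S where
  carrier := ℤ
  smul := fun _ a => a
  smul_add := fun _ _ _ => rfl
  mul_smul := fun _ _ _ => rfl

theorem cd_one_and_H1_of_Up_eq_p' (U : Type) [Semigroup U] :
    cohDim (upCon U).Quotient = 1 ∧
      ∀ M : SgModule (upCon U).Quotient,
        Nonempty (M.cohomology 1 ≃+
          (M.carrier ⧸ AddSubgroup.closure
            {x : M.carrier | ∃ a : M.carrier, x = M.smul (upP U) a - a})) := by
  have hH1 : ∀ M : SgModule (upCon U).Quotient,
      Nonempty (M.cohomology 1 ≃+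
        (M.carrier ⧸ AddSubgroup.closure
          {x : M.carrier | ∃ a : M.carrier, x = M.smul (upP U) a - a})) := by
    intro M
    obtain ⟨e⟩ := H1_equiv U M
    exact ⟨e⟩
  constructor
  · apply le_antisymm
    · apply sSup_le
      rintro e ⟨n, rfl, M, hM⟩
      match n with
      | 0 => exact_mod_cast zero_le_one
      | 1 => exact le_refl _
      | (m+2) =>
          exact absurd hM (not_nontrivial_iff_subsingleton.mpr
            (cohomology_subsingleton U M m))
    · apply le_sSup
      refine ⟨1, by norm_num, trivMod (upCon U).Quotient, ?_⟩
      -- H¹ of the trivial module is ℤ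
      obtain ⟨e⟩ := hH1 (trivMod (upCon U).Quotient)
      have hbot : AddSubgroup.closure
          {x : ℤ | ∃ a : ℤ, x = (trivMod (upCon U).Quotient).smul (upP U) a - a}
          = (⊥ : AddSubgroup ℤ) := by
        apply le_antisymm _ bot_le
        rw [AddSubgroup.closure_le]
        rintro x ⟨a, rfl⟩
        show (a - a : ℤ) ∈ (⊥ : AddSubgroup ℤ)
        simp
      have hqb : Nontrivial (ℤ ⧸ AddSubgroup.closure
          {x : ℤ | ∃ a : ℤ, x = (trivMod (upCon U).Quotient).smul (upP U) a - a}) := by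
        rw [hbot]
        exact (QuotientAddGroup.quotientBot (G := ℤ)).toEquiv.nontrivial
      exact e.toEquiv.nontrivial
  · exact hH1

end Main

/-- For any semigroup `U` and `T = ⟨U, p ∣ Up = p⟩`,
`c.d. T = 1` and `H¹(T, A) ≅ A/(p−1)A` for every `T`-module `A`. -/
theorem cd_one_and_H1_of_Up_eq_p (U : Type) [Semigroup U] :
    cohDim (upCon U).Quotient = 1 ∧
      ∀ M : SgModule (upCon U).Quotient,
        Nonempty (M.cohomology 1 ≃+
          (M.carrier ⧸ AddSubgroup.closure
            {x : M.carrier | ∃ a : M.carrier, x = M.smul (upP U) a - a})) := by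
  exact cd_one_and_H1_of_Up_eq_p' U
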